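/- Let H be a group and let G be a subgroup of finite index in the restricted direct product Π₀ i : ℤ, H. Then there exists an index i ∈ ℤ such that the coordinate projection onto the i-th factor maps G onto H; that is, for every h ∈ H there exists g ∈ G with g i = h. -/

import Mathlib

/-- The restricted direct product `Π₀ i : ℤ, H`: the subgroup of `ℤ → H`
consisting of the finitely supported functions (pointwise multiplication). -/
def IntRestrictedProduct (H : Type*) [Group H] : Subgroup (ℤ → H) where
  carrier := {f | (Function.mulSupport f).Finite}
  one_mem' := by simp [Function.mulSupport_one]
  mul_mem' := by
    intro f g hf hg
    exact ((hf.union hg).subset (Function.mulSupport_mul f g))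
  inv_mem' := by
    intro f hf
    simpa [Function.mulSupport_inv] using hf


/-- A finite-index subgroup of the restricted direct product `Π₀ i : ℤ, H`
surjects onto some coordinate factor: there is an `i : ℤ` such that every `h ∈ H`
is the `i`-th coordinate of some element of the subgroup. -/
theorem finiteIndex_subgroup_surjects_on_some_factor (H : Type*) [Group H]
    (G : Subgroup (IntRestrictedProduct H)) (hG : G.index ≠ 0) :
    ∃ i : ℤ, ∀ h : H, ∃ g ∈ G, ((g : ℤ → H)) i = h := by
  by_contra hcon
  push_neg at hcon
  choose f hf using hcon
  have hfin : ∀ i : ℤ, (Pi.mulSingle i (f i) : ℤ → H) ∈ IntRestrictedProduct H :=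
    fun i => Set.Finite.subset (Set.finite_singleton i)
      Pi.mulSupport_mulSingle_subset
  set e : ℤ → IntRestrictedProduct H := fun i => ⟨Pi.mulSingle i (f i), hfin i⟩ with he
  have hinj : Function.Injective (fun i => (QuotientGroup.mk (e i) : _ ⧸ G)) := by
    intro i j hij
    by_contra hne
    rw [QuotientGroup.eq] at hij
    have hval : (((((e i)⁻¹ * e j)⁻¹ : IntRestrictedProduct H)) : ℤ → H) i = f i := by
      have : (Pi.mulSingle j (f j) : ℤ → H) i = 1 :=
        by simp [Pi.mulSingle_apply, hne]
      simp [he, this]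
    exact (hf i (((e i)⁻¹ * e j)⁻¹ : IntRestrictedProduct H) (inv_mem hij)) hval
  have hfinq : Finite (IntRestrictedProduct H ⧸ G) := by
    have : Nat.card (IntRestrictedProduct H ⧸ G) ≠ 0 := hG
    exact Nat.finite_of_card_ne_zero this
  have : Finite ℤ := Finite.of_injective _ hinj
  exact (Int.infinite).not_finite this
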